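/- Every element of the semidirect product ℤ^{(ℤ)} ⋊ ℤ other than the identity has an infinite conjugacy class (the group is ICC). -/

import Mathlib

/-- The shift action of `ℤ` on `ℤ →₀ ℤ`: `(shiftZ p y) n = y (n + p)`. -/
noncomputable def shiftZ (p : ℤ) (y : ℤ →₀ ℤ) : ℤ →₀ ℤ :=
  Finsupp.equivMapDomain (Equiv.subRight p) y

/-- The semidirect product multiplication on `ℤ^(ℤ) ⋊ ℤ`:
`((xₙ), p) · ((yₙ), q) = ((xₙ + y_{n+p}), p + q)`. -/
noncomputable def gMul (g h : (ℤ →₀ ℤ) × ℤ) : (ℤ →₀ ℤ) × ℤ :=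
  (g.1 + shiftZ g.2 h.1, g.2 + h.2)

/-- The inverse in `ℤ^(ℤ) ⋊ ℤ`. -/
noncomputable def gInv (g : (ℤ →₀ ℤ) × ℤ) : (ℤ →₀ ℤ) × ℤ :=
  (-(shiftZ (-g.2) g.1), -g.2)

lemma shiftZ_apply (p : ℤ) (y : ℤ →₀ ℤ) (n : ℤ) : shiftZ p y n = y (n + p) := rfl

lemma shiftZ_zero (y : ℤ →₀ ℤ) : shiftZ 0 y = y := by
  ext n; rw [shiftZ_apply, add_zero]

lemma shiftZ_zero' (p : ℤ) : shiftZ p 0 = 0 := by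
  ext n; rw [shiftZ_apply]; rfl

lemma conj_eq (g x : (ℤ →₀ ℤ) × ℤ) :
    gMul (gMul g x) (gInv g) = (g.1 + shiftZ g.2 x.1 - shiftZ x.2 g.1, x.2) := by
  simp only [gMul, gInv, Prod.mk.injEq]
  constructor
  · ext n
    simp only [Finsupp.coe_add, Finsupp.coe_sub, Pi.add_apply, Pi.sub_apply,
      shiftZ_apply, Finsupp.coe_neg, Pi.neg_apply]
    have : n + (g.2 + x.2) + -g.2 = n + x.2 := by ring
    rw [this]
    ring
  · ring

lemma shift_ne (y : ℤ →₀ ℤ) (hy : y ≠ 0) {p q : ℤ} (h : p < q) :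
    shiftZ p y ≠ shiftZ q y := by
  have hs : y.support.Nonempty := Finsupp.support_nonempty_iff.mpr hy
  set m := y.support.max' hs with hm
  intro he
  have hmne : y m ≠ 0 := Finsupp.mem_support_iff.mp (y.support.max'_mem hs)
  have h3 : y (m - p + q) = 0 := by
    by_contra hne
    have hmem : m - p + q ∈ y.support := Finsupp.mem_support_iff.mpr hne
    have := y.support.le_max' _ hmem
    omega
  apply hmne
  have h1 : y m = (shiftZ p y) (m - p) := by rw [shiftZ_apply, sub_add_cancel]
  rw [h1, he, shiftZ_apply, h3]

/-- The group `ℤ^(ℤ) ⋊ ℤ` is ICC: every element other than the identity `(0, 0)` has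
an infinite conjugacy class. -/
theorem stmt_16 (x : (ℤ →₀ ℤ) × ℤ) (hx : x ≠ (0, 0)) :
    Set.Infinite {y | ∃ g, y = gMul (gMul g x) (gInv g)} := by
  by_cases hx2 : x.2 = 0
  · -- then x.1 ≠ 0
    have hx1 : x.1 ≠ 0 := by
      intro h
      apply hx
      exact Prod.ext h hx2
    apply Set.infinite_of_injective_forall_mem
      (f := fun k : ℤ => ((shiftZ k x.1, (0 : ℤ)) : (ℤ →₀ ℤ) × ℤ))
    · intro p q hpq
      simp only [Prod.mk.injEq] at hpq
      rcases lt_trichotomy p q with h | h | h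
      · exact absurd hpq.1 (shift_ne x.1 hx1 h)
      · exact h
      · exact absurd hpq.1.symm (shift_ne x.1 hx1 h)
    · intro k
      refine ⟨(0, k), ?_⟩
      rw [conj_eq]
      simp [hx2, shiftZ_zero']
  · apply Set.infinite_of_injective_forall_mem
      (f := fun c : ℕ =>
        ((Finsupp.single 0 (c : ℤ) + shiftZ 0 x.1 - shiftZ x.2 (Finsupp.single 0 (c : ℤ)),
          x.2) : (ℤ →₀ ℤ) × ℤ))
    · intro c1 c2 h
      simp only [Prod.mk.injEq] at h
      have hne : (0 : ℤ) ≠ x.2 := fun hh => hx2 hh.symm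
      have h0 := congrArg (fun f : ℤ →₀ ℤ => f 0) h.1
      simp only [Finsupp.coe_add, Finsupp.coe_sub, Pi.add_apply, Pi.sub_apply,
        shiftZ_apply, zero_add, Finsupp.single_eq_same,
        Finsupp.single_eq_of_ne' hne] at h0
      have : (c1 : ℤ) = c2 := by linarith
      exact_mod_cast this
    · intro c
      refine ⟨(Finsupp.single 0 (c : ℤ), 0), ?_⟩
      rw [conj_eq]
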